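/- If two processes are provably equal in AX^b (axioms A1–A4 plus B) then they are rooted branching bisimilar (soundness). -/
import Mathlib


namespace NDB

/-- The minimal process language `E ::= 0 | α.E | E + E`. -/
inductive NE (Act : Type) : Type where
  | zero : NE Act
  | pre : Act → NE Act → NE Act
  | plus : NE Act → NE Act → NE Act

variable {Act : Type}

/-- The SOS transition relation. -/
inductive step : NE Act → Act → NE Act → Prop where
  | pre (α : Act) (E : NE Act) : step (.pre α E) α E
  | left {E₁ E₂ : NE Act} {α : Act} {E' : NE Act} :
      step E₁ α E' → step (.plus E₁ E₂) α E'
  | right {E₁ E₂ : NE Act} {α : Act} {E' : NE Act} :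
      step E₂ α E' → step (.plus E₁ E₂) α E'

variable (τ : Act)

/-- `E →(α) E'` : a transition, or a vacuous step when `α = τ`. -/
def opt (E : NE Act) (α : Act) (E' : NE Act) : Prop :=
  step E α E' ∨ (α = τ ∧ E' = E)

/-- `E ⟹ E'` : the reflexive-transitive closure of `→(τ)`. -/
def wk : NE Act → NE Act → Prop :=
  Relation.ReflTransGen (fun E E' => opt τ E τ E')

/-- Branching bisimulation relations. -/
def IsBB (R : NE Act → NE Act → Prop) : Prop :=
  Symmetric R ∧ ∀ E F α E', R E F → step E α E' →
    ∃ F₁ F₂, wk τ F F₁ ∧ opt τ F₁ α F₂ ∧ R E F₁ ∧ R E' F₂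

/-- Branching bisimilarity `≈_b`. -/
def bb (E F : NE Act) : Prop := ∃ R, IsBB τ R ∧ R E F

/-- Rooted branching bisimilarity `≈_rb`. -/
def rbb (E F : NE Act) : Prop :=
  (∀ α E', step E α E' → ∃ F', step F α F' ∧ bb τ E' F') ∧
  (∀ α F', step F α F' → ∃ E', step E α E' ∧ bb τ E' F')

/-- Strong bisimulation relations. -/
def IsSB (R : NE Act → NE Act → Prop) : Prop :=
  Symmetric R ∧ ∀ E F α E', R E F → step E α E' →
    ∃ F', step F α F' ∧ R E' F'

/-- Strong bisimilarity `∼`. -/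
def sb (E F : NE Act) : Prop := ∃ R, IsSB R ∧ R E F

/-- `reach E E'` : `E'` is a derivative of `E`. -/
def reach : NE Act → NE Act → Prop :=
  Relation.ReflTransGen (fun E E' => ∃ α, step E α E')

/-- A process is concrete iff no derivative has an inert `τ`-transition. -/
def Concrete (E : NE Act) : Prop :=
  ∀ E', reach E E' → ∀ E'', step E' τ E'' → ¬ bb τ E' E''

/-- Provable equality in the theory `AX^b` (axioms A1–A4 and B). -/
inductive AXb (τ : Act) : NE Act → NE Act → Prop where
  | refl (E) : AXb τ E E
  | symm {E F} : AXb τ E F → AXb τ F E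
  | trans {E F G} : AXb τ E F → AXb τ F G → AXb τ E G
  | congPre (α : Act) {E F} : AXb τ E F → AXb τ (.pre α E) (.pre α F)
  | congPlusL {E E' F} : AXb τ E E' → AXb τ (.plus E F) (.plus E' F)
  | congPlusR {E F F'} : AXb τ F F' → AXb τ (.plus E F) (.plus E F')
  | A1 (E F) : AXb τ (.plus E F) (.plus F E)
  | A2 (E F G) : AXb τ (.plus (.plus E F) G) (.plus E (.plus F G))
  | A3 (E) : AXb τ (.plus E E) E
  | A4 (E) : AXb τ (.plus E .zero) E
  | B (α : Act) (E F) :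
      AXb τ (.pre α (.plus F (.pre τ (.plus E F)))) (.pre α (.plus E F))



section Aux

variable {τ}

lemma isBB_eq : IsBB (Act := Act) τ (· = ·) := by
  refine ⟨fun a b h => h.symm, ?_⟩
  rintro E F α E' rfl hs
  exact ⟨E, E', Relation.ReflTransGen.refl, Or.inl hs, rfl, rfl⟩

lemma bb_refl (E : NE Act) : bb τ E E := ⟨(· = ·), isBB_eq, rfl⟩

lemma bb_symm {E F : NE Act} (h : bb τ E F) : bb τ F E := by
  obtain ⟨R, hR, hEF⟩ := h
  exact ⟨R, hR, hR.1 hEF⟩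

lemma wk_lift {S : NE Act → NE Act → Prop} (hS : IsBB τ S) {G G' F : NE Act}
    (hGF : S G F) (hw : wk τ G G') : ∃ F', wk τ F F' ∧ S G' F' := by
  induction hw with
  | refl => exact ⟨F, Relation.ReflTransGen.refl, hGF⟩
  | tail _ hstep ih =>
    obtain ⟨F₁, hwF₁, hS₁⟩ := ih
    rcases hstep with hst | ⟨_, rfl⟩
    · obtain ⟨F₂, F₃, hw₂, hopt, _, hS₃⟩ := hS.2 _ _ _ _ hS₁ hst
      refine ⟨F₃, ?_, hS₃⟩
      exact (hwF₁.trans hw₂).tail hopt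
    · exact ⟨F₁, hwF₁, hS₁⟩

lemma comp_step {R S : NE Act → NE Act → Prop} (hR : IsBB τ R) (hS : IsBB τ S)
    {E G F α E'} (hEG : R E G) (hGF : S G F) (hs : step E α E') :
    ∃ F₁ F₂ G₁ G₂, wk τ F F₁ ∧ opt τ F₁ α F₂ ∧
      R E G₁ ∧ S G₁ F₁ ∧ R E' G₂ ∧ S G₂ F₂ := by
  obtain ⟨G₁, G₂, hwG, hoptG, hEG₁, hE'G₂⟩ := hR.2 _ _ _ _ hEG hs
  obtain ⟨F₁, hwF, hSG₁F₁⟩ := wk_lift hS hGF hwG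
  rcases hoptG with hst | ⟨hτ, rfl⟩
  · obtain ⟨F₂, F₃, hw₂, hopt₂, hS₁₂, hS₂₃⟩ := hS.2 _ _ _ _ hSG₁F₁ hst
    exact ⟨F₂, F₃, G₁, G₂, hwF.trans hw₂, hopt₂, hEG₁, hS₁₂, hE'G₂, hS₂₃⟩
  · exact ⟨F₁, F₁, G₂, G₂, hwF, Or.inr ⟨hτ, rfl⟩, hEG₁, hSG₁F₁, hE'G₂, hSG₁F₁⟩

lemma bb_trans {E G F : NE Act} (h1 : bb τ E G) (h2 : bb τ G F) : bb τ E F := by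
  obtain ⟨R, hR, hEG⟩ := h1
  obtain ⟨S, hS, hGF⟩ := h2
  refine ⟨fun X Y => (∃ Z, R X Z ∧ S Z Y) ∨ (∃ Z, S X Z ∧ R Z Y), ⟨?_, ?_⟩,
    Or.inl ⟨G, hEG, hGF⟩⟩
  · rintro X Y (⟨Z, h1, h2⟩ | ⟨Z, h1, h2⟩)
    · exact Or.inr ⟨Z, hS.1 h2, hR.1 h1⟩
    · exact Or.inl ⟨Z, hR.1 h2, hS.1 h1⟩
  · rintro X Y α X' (⟨Z, h1, h2⟩ | ⟨Z, h1, h2⟩) hs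
    · obtain ⟨F₁, F₂, G₁, G₂, hw, hopt, a1, a2, a3, a4⟩ := comp_step hR hS h1 h2 hs
      exact ⟨F₁, F₂, hw, hopt, Or.inl ⟨G₁, a1, a2⟩, Or.inl ⟨G₂, a3, a4⟩⟩
    · obtain ⟨F₁, F₂, G₁, G₂, hw, hopt, a1, a2, a3, a4⟩ := comp_step hS hR h1 h2 hs
      exact ⟨F₁, F₂, hw, hopt, Or.inr ⟨G₁, a1, a2⟩, Or.inr ⟨G₂, a3, a4⟩⟩

lemma isBB_bb : IsBB (Act := Act) τ (bb τ) := by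
  refine ⟨fun a b h => bb_symm h, ?_⟩
  rintro E F α E' ⟨R, hR, hEF⟩ hs
  obtain ⟨F₁, F₂, hw, hopt, h1, h2⟩ := hR.2 _ _ _ _ hEF hs
  exact ⟨F₁, F₂, hw, hopt, ⟨R, hR, h1⟩, ⟨R, hR, h2⟩⟩

lemma bb_of_rbb {E F : NE Act} (h : rbb τ E F) : bb τ E F := by
  refine ⟨fun X Y => bb τ X Y ∨ (X = E ∧ Y = F) ∨ (X = F ∧ Y = E), ⟨?_, ?_⟩,
    Or.inr (Or.inl ⟨rfl, rfl⟩)⟩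
  · rintro X Y (hb | ⟨rfl, rfl⟩ | ⟨rfl, rfl⟩)
    · exact Or.inl (bb_symm hb)
    · exact Or.inr (Or.inr ⟨rfl, rfl⟩)
    · exact Or.inr (Or.inl ⟨rfl, rfl⟩)
  · rintro X Y α X' (hb | ⟨rfl, rfl⟩ | ⟨rfl, rfl⟩) hs
    · obtain ⟨F₁, F₂, hw, hopt, h1, h2⟩ := isBB_bb.2 _ _ _ _ hb hs
      exact ⟨F₁, F₂, hw, hopt, Or.inl h1, Or.inl h2⟩
    · obtain ⟨Y', hY', hbb⟩ := h.1 α X' hs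
      exact ⟨Y, Y', Relation.ReflTransGen.refl, Or.inl hY',
        Or.inr (Or.inl ⟨rfl, rfl⟩), Or.inl hbb⟩
    · obtain ⟨Y', hY', hbb⟩ := h.2 α X' hs
      exact ⟨Y, Y', Relation.ReflTransGen.refl, Or.inl hY',
        Or.inr (Or.inr ⟨rfl, rfl⟩), Or.inl (bb_symm hbb)⟩

lemma rbb_of_iff {E F : NE Act}
    (h : ∀ α X, step E α X ↔ step F α X) : rbb τ E F :=
  ⟨fun α X hs => ⟨X, (h α X).1 hs, bb_refl X⟩,
   fun α X hs => ⟨X, (h α X).2 hs, bb_refl X⟩⟩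

lemma rbb_refl (E : NE Act) : rbb τ E E := rbb_of_iff (fun _ _ => Iff.rfl)

lemma rbb_symm {E F : NE Act} (h : rbb τ E F) : rbb τ F E :=
  ⟨fun α F' hs => (h.2 α F' hs).imp (fun _ ⟨h1, h2⟩ => ⟨h1, bb_symm h2⟩),
   fun α E' hs => (h.1 α E' hs).imp (fun _ ⟨h1, h2⟩ => ⟨h1, bb_symm h2⟩)⟩

lemma rbb_trans {E G F : NE Act} (h1 : rbb τ E G) (h2 : rbb τ G F) :
    rbb τ E F := by
  constructor
  · intro α E' hs
    obtain ⟨G', hG', hb1⟩ := h1.1 α E' hs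
    obtain ⟨F', hF', hb2⟩ := h2.1 α G' hG'
    exact ⟨F', hF', bb_trans hb1 hb2⟩
  · intro α F' hs
    obtain ⟨G', hG', hb2⟩ := h2.2 α F' hs
    obtain ⟨E', hE', hb1⟩ := h1.2 α G' hG'
    exact ⟨E', hE', bb_trans hb1 hb2⟩

lemma step_zero {α : Act} {X : NE Act} (h : step NE.zero α X) : False := by
  cases h

/-- The relation witnessing the soundness of axiom B. -/
inductive BRel (τ : Act) (E F : NE Act) : NE Act → NE Act → Prop where
  | pq : BRel τ E F (.plus F (.pre τ (.plus E F))) (.plus E F)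
  | qp : BRel τ E F (.plus E F) (.plus F (.pre τ (.plus E F)))
  | eq (X : NE Act) : BRel τ E F X X

lemma isBB_BRel (E F : NE Act) : IsBB τ (BRel τ E F) := by
  constructor
  · rintro X Y (h | h | h)
    · exact .qp
    · exact .pq
    · exact .eq _
  · rintro X Y α X' (_ | _ | _) hs
    · -- pq : X = F + τ.(E+F), Y = E+F
      cases hs with
      | left hF =>
        exact ⟨.plus E F, X', Relation.ReflTransGen.refl,
          Or.inl (.right hF), .pq, .eq _⟩
      | right hpre =>
        cases hpre
        exact ⟨.plus E F, .plus E F, Relation.ReflTransGen.refl,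
          Or.inr ⟨rfl, rfl⟩, .pq, .eq _⟩
    · -- qp : X = E+F, Y = F + τ.(E+F)
      cases hs with
      | left hE =>
        exact ⟨.plus E F, X', Relation.ReflTransGen.single
          (Or.inl (.right (.pre τ (.plus E F)))),
          Or.inl (.left hE), .eq _, .eq _⟩
      | right hF =>
        exact ⟨.plus F (.pre τ (.plus E F)), X', Relation.ReflTransGen.refl,
          Or.inl (.left hF), .qp, .eq _⟩
    · exact ⟨X, X', Relation.ReflTransGen.refl, Or.inl hs, .eq _, .eq _⟩

end Aux

/-- Soundness of `AX^b`: provably equal processes are rooted branching bisimilar. -/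
theorem statement12 {Act : Type} (τ : Act) (E F : NE Act)
    (h : AXb τ E F) : rbb τ E F := by
  induction h with
  | refl E => exact rbb_refl E
  | symm _ ih => exact rbb_symm ih
  | trans _ _ ih1 ih2 => exact rbb_trans ih1 ih2
  | congPre α h ih =>
    constructor
    · intro β X hs
      cases hs
      exact ⟨_, .pre α _, bb_of_rbb ih⟩
    · intro β X hs
      cases hs
      exact ⟨_, .pre α _, bb_of_rbb ih⟩
  | @congPlusL E E' G _ ih =>
    constructor
    · intro α X hs
      cases hs with
      | left hE =>
        obtain ⟨Y, hY, hb⟩ := ih.1 α X hE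
        exact ⟨Y, .left hY, hb⟩
      | right hG => exact ⟨X, .right hG, bb_refl X⟩
    · intro α X hs
      cases hs with
      | left hE =>
        obtain ⟨Y, hY, hb⟩ := ih.2 α X hE
        exact ⟨Y, .left hY, hb⟩
      | right hG => exact ⟨X, .right hG, bb_refl X⟩
  | @congPlusR G E E' _ ih =>
    constructor
    · intro α X hs
      cases hs with
      | left hG => exact ⟨X, .left hG, bb_refl X⟩
      | right hE =>
        obtain ⟨Y, hY, hb⟩ := ih.1 α X hE
        exact ⟨Y, .right hY, hb⟩
    · intro α X hs
      cases hs with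
      | left hG => exact ⟨X, .left hG, bb_refl X⟩
      | right hE =>
        obtain ⟨Y, hY, hb⟩ := ih.2 α X hE
        exact ⟨Y, .right hY, hb⟩
  | A1 E F =>
    refine rbb_of_iff (fun α X => ⟨?_, ?_⟩) <;> intro hs <;> cases hs with
    | left h => exact .right h
    | right h => exact .left h
  | A2 E F G =>
    refine rbb_of_iff (fun α X => ⟨?_, ?_⟩) <;> intro hs
    · cases hs with
      | left h =>
        cases h with
        | left h => exact .left h
        | right h => exact .right (.left h)
      | right h => exact .right (.right h)
    · cases hs with
      | left h => exact .left (.left h)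
      | right h =>
        cases h with
        | left h => exact .left (.right h)
        | right h => exact .right h
  | A3 E =>
    refine rbb_of_iff (fun α X => ⟨?_, .left⟩)
    intro hs
    cases hs with
    | left h => exact h
    | right h => exact h
  | A4 E =>
    refine rbb_of_iff (fun α X => ⟨?_, .left⟩)
    intro hs
    cases hs with
    | left h => exact h
    | right h => exact absurd h step_zero
  | B α E F =>
    constructor
    · intro β X hs
      cases hs
      exact ⟨.plus E F, .pre α _, ⟨BRel τ E F, isBB_BRel E F, .pq⟩⟩
    · intro β X hs
      cases hs
      exact ⟨.plus F (.pre τ (.plus E F)), .pre α _,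
        ⟨BRel τ E F, isBB_BRel E F, .pq⟩⟩

end NDB
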